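/- Let n ≥ 1 and let p ∈ ℝ^n satisfy 0 < p_1 < p_2 < ⋯ < p_n. If x ∈ ℝ^n satisfies s_{2l}(x) = s_{2l}(p) for all l = 1,…,n, then every coordinate of x is nonzero and the absolute values |x_1|,…,|x_n| are pairwise distinct. Consequently, the nonempty variety {(x, t) ∈ ℝ^n × ℝ : s_{2l}(x) = s_{2l}(p) for l = 1,…,n} is disjoint from the set of points (x,t) with x_i = 0 for some i or |x_i| = |x_{i'}| for some i ≠ i'. -/

import Mathlib

lemma aeval_psum' {n : ℕ} (y : Fin n → ℝ) (k : ℕ) :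
    (MvPolynomial.aeval y) (MvPolynomial.psum (Fin n) ℝ k) = ∑ i, y i ^ k := by
  simp [MvPolynomial.psum, map_sum]

lemma esymm_eq_of_psum_eq {n : ℕ} (y q : Fin n → ℝ)
    (h : ∀ l, 1 ≤ l → l ≤ n → ∑ i, y i ^ l = ∑ i, q i ^ l) :
    ∀ k, k ≤ n → (MvPolynomial.aeval y) (MvPolynomial.esymm (Fin n) ℝ k)
      = (MvPolynomial.aeval q) (MvPolynomial.esymm (Fin n) ℝ k) := by
  intro k
  induction k using Nat.strong_induction_on with
  | _ k ih =>
    intro hk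
    rcases Nat.eq_zero_or_pos k with rfl | hk1
    · simp
    have hy := congrArg (MvPolynomial.aeval y) (MvPolynomial.mul_esymm_eq_sum (Fin n) ℝ k)
    have hq := congrArg (MvPolynomial.aeval q) (MvPolynomial.mul_esymm_eq_sum (Fin n) ℝ k)
    simp only [map_mul, map_sum, map_pow, map_neg, map_one, map_natCast, aeval_psum'] at hy hq
    have hsum : ∑ a ∈ Finset.HasAntidiagonal.antidiagonal k with a.1 < k,
        (-1:ℝ) ^ a.1 * (MvPolynomial.aeval y) (MvPolynomial.esymm (Fin n) ℝ a.1) * ∑ i, y i ^ a.2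
        = ∑ a ∈ Finset.HasAntidiagonal.antidiagonal k with a.1 < k,
        (-1:ℝ) ^ a.1 * (MvPolynomial.aeval q) (MvPolynomial.esymm (Fin n) ℝ a.1)
          * ∑ i, q i ^ a.2 := by
      refine Finset.sum_congr rfl ?_
      intro a ha
      simp only [Finset.mem_filter, Finset.HasAntidiagonal.mem_antidiagonal] at ha
      obtain ⟨hak, halt⟩ := ha
      rw [ih a.1 halt (by omega), h a.2 (by omega) (by omega)]
    have hfin : (k : ℝ) * (MvPolynomial.aeval y) (MvPolynomial.esymm (Fin n) ℝ k)
        = (k : ℝ) * (MvPolynomial.aeval q) (MvPolynomial.esymm (Fin n) ℝ k) := by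
      rw [hy, hq, hsum]
    exact mul_left_cancel₀ (by exact_mod_cast hk1.ne') hfin

lemma multiset_eq_of_psum_eq {n : ℕ} (y q : Fin n → ℝ)
    (h : ∀ l, 1 ≤ l → l ≤ n → ∑ i, y i ^ l = ∑ i, q i ^ l) :
    Multiset.map y Finset.univ.val = Multiset.map q Finset.univ.val := by
  have hes : ∀ k ≤ n, (Multiset.map y Finset.univ.val).esymm k
      = (Multiset.map q Finset.univ.val).esymm k := by
    intro k hk
    rw [← MvPolynomial.aeval_esymm_eq_multiset_esymm (Fin n) ℝ k y,
      ← MvPolynomial.aeval_esymm_eq_multiset_esymm (Fin n) ℝ k q]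
    exact esymm_eq_of_psum_eq y q h k hk
  have hprod : ((Multiset.map y Finset.univ.val).map
        fun t => Polynomial.X - Polynomial.C t).prod
      = ((Multiset.map q Finset.univ.val).map fun t => Polynomial.X - Polynomial.C t).prod := by
    rw [Multiset.prod_X_sub_X_eq_sum_esymm, Multiset.prod_X_sub_X_eq_sum_esymm]
    simp only [Multiset.card_map, Finset.card_val, Finset.card_univ, Fintype.card_fin]
    refine Finset.sum_congr rfl fun j hj => ?_
    rw [hes j (Nat.lt_succ_iff.mp (Finset.mem_range.mp hj))]
  have hroots := congrArg Polynomial.roots hprod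
  rwa [Polynomial.roots_multiset_prod_X_sub_C, Polynomial.roots_multiset_prod_X_sub_C] at hroots

theorem non_essential_counterexample
    (n : ℕ) (hn : 1 ≤ n) (p : Fin n → ℝ)
    (hpos : 0 < p ⟨0, hn⟩) (hmono : StrictMono p) :
    (∀ x : Fin n → ℝ,
      (∀ l, 1 ≤ l → l ≤ n → ∑ i, x i ^ (2 * l) = ∑ i, p i ^ (2 * l)) →
      (∀ i, x i ≠ 0) ∧ Function.Injective (fun i => |x i|)) ∧
    ({xt : (Fin n → ℝ) × ℝ |
        ∀ l, 1 ≤ l → l ≤ n → ∑ i, xt.1 i ^ (2 * l) = ∑ i, p i ^ (2 * l)}.Nonempty ∧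
      ∀ xt : (Fin n → ℝ) × ℝ,
        (∀ l, 1 ≤ l → l ≤ n → ∑ i, xt.1 i ^ (2 * l) = ∑ i, p i ^ (2 * l)) →
        ¬((∃ i, xt.1 i = 0) ∨ ∃ i i' : Fin n, i ≠ i' ∧ |xt.1 i| = |xt.1 i'|)) := by
  have hppos : ∀ i, 0 < p i := fun i =>
    lt_of_lt_of_le hpos (hmono.monotone (Fin.le_def.mpr (Nat.zero_le _)))
  have key : ∀ x : Fin n → ℝ,
      (∀ l, 1 ≤ l → l ≤ n → ∑ i, x i ^ (2 * l) = ∑ i, p i ^ (2 * l)) →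
      (∀ i, x i ≠ 0) ∧ Function.Injective (fun i => |x i|) := by
    intro x hx
    set y : Fin n → ℝ := fun i => x i ^ 2 with hy
    set q : Fin n → ℝ := fun i => p i ^ 2 with hq
    have hps : ∀ l, 1 ≤ l → l ≤ n → ∑ i, y i ^ l = ∑ i, q i ^ l := by
      intro l h1 h2
      simpa [hy, hq, ← pow_mul] using hx l h1 h2
    have hms := multiset_eq_of_psum_eq y q hps
    have hqinj : Function.Injective q := by
      intro i j hij
      simp only [hq] at hij
      rcases lt_trichotomy i j with hlt | heq | hlt
      · exfalso; have h2 := hmono hlt; have h3 := hppos i; nlinarith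
      · exact heq
      · exfalso; have h2 := hmono hlt; have h3 := hppos j; nlinarith
    have hnodup : (Multiset.map y Finset.univ.val).Nodup := by
      rw [hms]; exact Finset.univ.nodup.map hqinj
    have hyinj : Function.Injective y := by
      intro i j hij
      exact Multiset.inj_on_of_nodup_map hnodup i (by simp) j (by simp) hij
    constructor
    · intro i hi
      have hmem : y i ∈ Multiset.map q Finset.univ.val := by
        rw [← hms]; exact Multiset.mem_map_of_mem y (by simp)
      obtain ⟨j, _, hj⟩ := Multiset.mem_map.mp hmem
      have hpos' : (0:ℝ) < y i := hj ▸ pow_pos (hppos j) 2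
      simp [hy, hi] at hpos'
    · intro i j hij
      apply hyinj
      simp only at hij
      simp only [hy, ← sq_abs (x i), ← sq_abs (x j), hij]
  refine ⟨key, ⟨(p, 0), fun l _ _ => rfl⟩, ?_⟩
  rintro ⟨x, t⟩ hx (⟨i, hi⟩ | ⟨i, i', hne, habs⟩)
  · exact (key x hx).1 i hi
  · exact hne ((key x hx).2 habs)
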